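/- Let c₁, c₂, c₋₁, c₋₂ ∈ ℂ be all nonzero, let 0 ≤ η₁₋ < η₂₋ and 0 ≤ η₁₊ < η₂₊ be reals, put g₋(z) = c₋₂ e^{-iη₂₋ z} + c₋₁ e^{-iη₁₋ z}, g₊(z) = c₁ e^{iη₁₊ z} + c₂ e^{iη₂₊ z}, and suppose the ratio r = (η₂₊−η₁₊)/(η₂₋−η₁₋) is irrational. Then inf over the zeros z_k of g₋ of |g₊(z_k)| > 0 if and only if |c₁/c₂|^{η₂₋−η₁₋} ≠ |c₋₂/c₋₁|^{η₂₊−η₁₊}. -/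

import Mathlib

noncomputable section
open Complex

lemma dense_int_combo {r : ℝ} (hr : Irrational r) (t δ : ℝ) (hδ : 0 < δ) :
    ∃ k m : ℤ, |(k : ℝ) * r + m - t| < δ := by
  set S : AddSubgroup ℝ := AddSubgroup.closure {r, 1} with hS
  rcases S.dense_or_cyclic with hd | ⟨a, ha⟩
  · have ht : t ∈ closure (S : Set ℝ) := hd t
    rw [Metric.mem_closure_iff] at ht
    obtain ⟨s, hs, hdist⟩ := ht δ hδ
    have hs' : s ∈ AddSubgroup.closure ({r, 1} : Set ℝ) := hs
    rw [AddSubgroup.mem_closure_pair] at hs'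
    obtain ⟨k, m, hkm⟩ := hs'
    refine ⟨k, m, ?_⟩
    have : (k : ℝ) * r + m = s := by
      rw [← hkm]; push_cast [zsmul_eq_mul]; ring
    rw [this, abs_sub_comm]
    simpa [Real.dist_eq] using hdist
  · exfalso
    have h1 : (1 : ℝ) ∈ S := AddSubgroup.subset_closure (by simp)
    have hr' : r ∈ S := AddSubgroup.subset_closure (by simp)
    rw [ha, AddSubgroup.mem_closure_singleton] at h1 hr'
    obtain ⟨n, hn⟩ := h1
    obtain ⟨m, hm⟩ := hr'
    have hn0 : (n : ℝ) ≠ 0 := by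
      intro h
      rw [zsmul_eq_mul, h, zero_mul] at hn
      exact one_ne_zero hn.symm
    exact hr ⟨(m : ℚ) / n, by
      push_cast
      rw [zsmul_eq_mul] at hn hm
      field_simp
      linear_combination (-(m : ℝ)) * hn + (n : ℝ) * hm⟩

/-- Example 5.13 / Lemma 3.3 of [BKdST2]: for irrational ratio of frequency gaps, the
values of `g₊` at the zeros `z_k` of the binomial `g₋` are bounded away from `0` iff
`|c₁/c₂|^{η₂₋−η₁₋} ≠ |c₋₂/c₋₁|^{η₂₊−η₁₊}`. -/
theorem stmt19 (c1 c2 cm1 cm2 : ℂ)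
    (hc1 : c1 ≠ 0) (hc2 : c2 ≠ 0) (hcm1 : cm1 ≠ 0) (hcm2 : cm2 ≠ 0)
    (e1m e2m e1p e2p : ℝ)
    (h1m : 0 ≤ e1m) (hm : e1m < e2m) (h1p : 0 ≤ e1p) (hp : e1p < e2p)
    (hirr : Irrational ((e2p - e1p) / (e2m - e1m)))
    (zk : ℤ → ℂ)
    (hzk : ∀ k : ℤ, zk k = (1 / ((e2m : ℂ) - (e1m : ℂ))) *
      (((-cm2 / cm1).arg : ℂ) + 2 * (k : ℂ) * (Real.pi : ℂ)
        - Complex.I * (Real.log (‖cm2 / cm1‖) : ℂ)))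
    (gp : ℂ → ℂ)
    (hgp : ∀ z : ℂ, gp z
      = c1 * Complex.exp (Complex.I * e1p * z) + c2 * Complex.exp (Complex.I * e2p * z)) :
    (∃ ε : ℝ, 0 < ε ∧ ∀ k : ℤ, ε ≤ ‖gp (zk k)‖) ↔
      Real.rpow (‖c1 / c2‖) (e2m - e1m)
        ≠ Real.rpow (‖cm2 / cm1‖) (e2p - e1p) := by
  have hΔm : (0:ℝ) < e2m - e1m := by linarith
  have hΔp : (0:ℝ) < e2p - e1p := by linarith
  set Δm := e2m - e1m with hΔmdef
  set Δp := e2p - e1p with hΔpdef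
  set θ := (-cm2 / cm1).arg with hθdef
  set L := Real.log (‖cm2 / cm1‖) with hLdef
  set A := Real.exp (e1p * L / Δm) with hAdef
  set ρ := Real.exp (Δp * L / Δm) with hρdef
  have hA : 0 < A := Real.exp_pos _
  have hρ : 0 < ρ := Real.exp_pos _
  have habs2 : 0 < ‖c2‖ := norm_pos_iff.mpr hc2
  have hΔm0 : (Δm : ℝ) ≠ 0 := ne_of_gt hΔm
  have hΔmC : ((e2m : ℂ) - (e1m : ℂ)) ≠ 0 := by
    intro h
    apply hΔm0
    have := congrArg Complex.re h
    simpa [hΔmdef] using this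
  set φ : ℤ → ℝ := fun k => Δp * (θ + 2 * Real.pi * k) / Δm with hφdef
  -- exponent computation
  have hIz : ∀ (c : ℝ) (k : ℤ), Complex.I * (c : ℂ) * zk k
      = ((c * L / Δm : ℝ) : ℂ) + Complex.I * ((c * (θ + 2 * Real.pi * k) / Δm : ℝ) : ℂ) := by
    intro c k
    rw [hzk]
    have hI : Complex.I * Complex.I = -1 := Complex.I_mul_I
    simp only [hΔmdef]
    push_cast
    field_simp
    linear_combination (-(c : ℂ) * (L : ℂ)) * hI
  have hexp : ∀ (c : ℝ) (k : ℤ), Complex.exp (Complex.I * (c : ℂ) * zk k)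
      = (Real.exp (c * L / Δm) : ℂ)
        * Complex.exp (Complex.I * ((c * (θ + 2 * Real.pi * k) / Δm : ℝ) : ℂ)) := by
    intro c k
    rw [hIz c k, Complex.exp_add, Complex.ofReal_exp]
  have habs1 : ∀ (x : ℝ), ‖Complex.exp (Complex.I * (x : ℂ))‖ = 1 := by
    intro x
    rw [mul_comm, Complex.norm_exp_ofReal_mul_I]
  have key : ∀ k : ℤ, gp (zk k) = Complex.exp (Complex.I * (e1p : ℂ) * zk k)
      * (c1 + c2 * (ρ : ℂ) * Complex.exp (Complex.I * ((φ k : ℝ) : ℂ))) := by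
    intro k
    rw [hgp]
    have hsplit : Complex.exp (Complex.I * (e2p : ℂ) * zk k)
        = Complex.exp (Complex.I * (e1p : ℂ) * zk k) * Complex.exp (Complex.I * (Δp : ℂ) * zk k) := by
      rw [← Complex.exp_add]
      congr 1
      push_cast [hΔpdef]
      ring
    rw [hsplit, hexp Δp k]
    rw [hφdef]
    ring
  have keyabs : ∀ k : ℤ, ‖gp (zk k)‖
      = A * ‖c1 + c2 * (ρ : ℂ) * Complex.exp (Complex.I * ((φ k : ℝ) : ℂ))‖ := by
    intro k
    rw [key k, norm_mul, hexp e1p k, norm_mul, Complex.norm_real, Real.norm_eq_abs,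
      habs1, abs_of_pos (Real.exp_pos _), mul_one]
  -- rpow reformulation
  have hposc12 : 0 < ‖c1 / c2‖ := norm_pos_iff.mpr (div_ne_zero hc1 hc2)
  have hposcm : 0 < ‖cm2 / cm1‖ := norm_pos_iff.mpr (div_ne_zero hcm2 hcm1)
  have key2 : Real.rpow (‖c1 / c2‖) Δm = Real.rpow (‖cm2 / cm1‖) Δp
      ↔ ‖c1‖ = ‖c2‖ * ρ := by
    have hr1 : Real.rpow (‖c1 / c2‖) Δm
        = Real.exp (Real.log (‖c1 / c2‖) * Δm) := Real.rpow_def_of_pos hposc12 Δm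
    have hr2 : Real.rpow (‖cm2 / cm1‖) Δp
        = Real.exp (L * Δp) := Real.rpow_def_of_pos hposcm Δp
    rw [hr1, hr2, Real.exp_eq_exp]
    constructor
    · intro h
      have hlog : Real.log (‖c1 / c2‖) = Δp * L / Δm := by
        rw [eq_div_iff hΔm0]
        linear_combination h
      have h2 := congrArg Real.exp hlog
      rw [Real.exp_log hposc12, ← hρdef] at h2
      rw [norm_div] at h2
      field_simp at h2
      linarith [h2]
    · intro h
      have h2 : ‖c1 / c2‖ = ρ := by
        rw [norm_div, h]
        field_simp
      rw [h2, hρdef, Real.log_exp]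
      field_simp
  constructor
  · -- bounded away from 0 → rpow condition
    rintro ⟨ε, hε, hbd⟩ heq
    have habs : ‖c1‖ = ‖c2‖ * ρ := key2.mp heq
    have hratio : ‖c1 / c2‖ = ρ := by
      rw [norm_div, habs]
      field_simp
    set ψ := (-(c1 / c2)).arg with hψdef
    have hrep : (ρ : ℂ) * Complex.exp (Complex.I * (ψ : ℂ)) = -(c1 / c2) := by
      have h3 := Complex.norm_mul_exp_arg_mul_I (-(c1 / c2))
      rw [norm_neg, hratio] at h3
      rw [mul_comm Complex.I ((ψ : ℝ) : ℂ)]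
      exact h3
    set C := A * (‖c2‖ * ρ) with hCdef
    have hC : 0 < C := by positivity
    have hδ0 : 0 < min 1 (ε / (4 * C)) := by positivity
    set δ0 := min 1 (ε / (4 * C)) with hδ0def
    obtain ⟨k, m, hkm⟩ := dense_int_combo hirr ((ψ - (Δp / Δm) * θ) / (2 * Real.pi))
      (δ0 / (2 * Real.pi)) (by positivity)
    set d : ℝ := φ k - ψ + 2 * Real.pi * m with hd_def
    have hdsmall : |d| < δ0 := by
      have heqd : d = 2 * Real.pi * ((k : ℝ) * (Δp / Δm) + m
          - (ψ - (Δp / Δm) * θ) / (2 * Real.pi)) := by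
        rw [hd_def, hφdef]
        field_simp
        ring
      rw [heqd, abs_mul, abs_of_pos Real.two_pi_pos]
      calc 2 * Real.pi * |(k : ℝ) * (Δp / Δm) + m - (ψ - (Δp / Δm) * θ) / (2 * Real.pi)|
          < 2 * Real.pi * (δ0 / (2 * Real.pi)) := by
            exact mul_lt_mul_of_pos_left hkm Real.two_pi_pos
        _ = δ0 := by field_simp
    have hexpd : Complex.exp (Complex.I * ((φ k : ℝ) : ℂ))
        = Complex.exp (Complex.I * (ψ : ℂ)) * Complex.exp (Complex.I * ((d : ℝ) : ℂ)) := by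
      rw [← Complex.exp_add]
      have h2 : Complex.I * ((φ k : ℝ) : ℂ)
          = Complex.I * (ψ : ℂ) + Complex.I * ((d : ℝ) : ℂ) + ((-m : ℤ) : ℂ) * (2 * (Real.pi : ℂ) * Complex.I) := by
        have : (d : ℂ) = ((φ k : ℝ) : ℂ) - (ψ : ℂ) + 2 * (Real.pi : ℂ) * (m : ℂ) := by
          rw [hd_def]; push_cast; ring
        rw [this]; push_cast; ring
      rw [h2, Complex.exp_add, Complex.exp_int_mul_two_pi_mul_I, mul_one]
    have hval : c1 + c2 * (ρ : ℂ) * Complex.exp (Complex.I * ((φ k : ℝ) : ℂ))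
        = c2 * (ρ : ℂ) * Complex.exp (Complex.I * (ψ : ℂ))
          * (Complex.exp (Complex.I * ((d : ℝ) : ℂ)) - 1) := by
      rw [hexpd]
      have h4 : c2 * ((ρ : ℂ) * Complex.exp (Complex.I * (ψ : ℂ))) = -c1 := by
        rw [hrep]
        field_simp
      linear_combination h4
    have hbound : ‖gp (zk k)‖ ≤ C * (2 * |d|) := by
      rw [keyabs k, hval]
      rw [norm_mul, norm_mul, norm_mul, habs1, Complex.norm_real, Real.norm_eq_abs, abs_of_pos hρ, mul_one]
      have h5 : ‖Complex.exp (Complex.I * ((d : ℝ) : ℂ)) - 1‖ ≤ 2 * |d| := by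
        have h6 : ‖Complex.I * ((d : ℝ) : ℂ)‖ = |d| := by
          rw [norm_mul, Complex.norm_I, Complex.norm_real, Real.norm_eq_abs, one_mul]
        have h7 : ‖Complex.I * ((d : ℝ) : ℂ)‖ ≤ 1 := by
          rw [h6]
          exact le_trans hdsmall.le (min_le_left _ _)
        calc ‖Complex.exp (Complex.I * ((d : ℝ) : ℂ)) - 1‖
            ≤ 2 * ‖Complex.I * ((d : ℝ) : ℂ)‖ := Complex.norm_exp_sub_one_le h7
          _ = 2 * |d| := by rw [h6]
      calc A * (‖c2‖ * ρ * ‖Complex.exp (Complex.I * ((d : ℝ) : ℂ)) - 1‖)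
          ≤ A * (‖c2‖ * ρ * (2 * |d|)) := by
            apply mul_le_mul_of_nonneg_left _ hA.le
            exact mul_le_mul_of_nonneg_left h5 (by positivity)
        _ = C * (2 * |d|) := by rw [hCdef]; ring
    have hlt : C * (2 * |d|) < ε := by
      have h8 : δ0 ≤ ε / (4 * C) := min_le_right _ _
      have h9 : C * (2 * |d|) < C * (2 * δ0) := by
        apply mul_lt_mul_of_pos_left _ hC
        linarith
      have h10 : C * (2 * (ε / (4 * C))) = ε / 2 := by
        field_simp
        ring
      nlinarith
    exact absurd (hbd k) (by linarith [hbound, hlt])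
  · -- rpow condition → bounded away from 0
    intro hne
    have habsne : ‖c1‖ ≠ ‖c2‖ * ρ := fun h => hne (key2.mpr h)
    refine ⟨A * |‖c1‖ - ‖c2‖ * ρ|, by
      have : ‖c1‖ - ‖c2‖ * ρ ≠ 0 := sub_ne_zero.mpr habsne
      positivity, ?_⟩
    intro k
    rw [keyabs k]
    apply mul_le_mul_of_nonneg_left _ hA.le
    have hb : ‖c2 * (ρ : ℂ) * Complex.exp (Complex.I * ((φ k : ℝ) : ℂ))‖
        = ‖c2‖ * ρ := by
      rw [norm_mul, norm_mul, habs1, Complex.norm_real, Real.norm_eq_abs, abs_of_pos hρ, mul_one]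
    calc |‖c1‖ - ‖c2‖ * ρ|
        = |‖c1‖ - ‖-(c2 * (ρ : ℂ) * Complex.exp (Complex.I * ((φ k : ℝ) : ℂ)))‖| := by
          rw [norm_neg]
          rw [hb]
      _ ≤ ‖c1 - -(c2 * (ρ : ℂ) * Complex.exp (Complex.I * ((φ k : ℝ) : ℂ)))‖ :=
          abs_norm_sub_norm_le _ _
      _ = ‖c1 + c2 * (ρ : ℂ) * Complex.exp (Complex.I * ((φ k : ℝ) : ℂ))‖ := by
          rw [sub_neg_eq_add]
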